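/- Let p > 3 be prime and let x₁, x₂ be residues mod p with x₁ ≢ x₂ (mod p). Then the double sum over α, β mod p of (Legendre symbol of (x₁³ + α·x₁ + β) mod p) times (Legendre symbol of (x₂³ + α·x₂ + β) mod p) equals 0. -/

import Mathlib

open Finset

variable {p : ℕ} [Fact p.Prime]

lemma key (hp : p ≠ 2) (a b : ZMod p) (hab : a ≠ b) :
    ∑ β : ZMod p, quadraticChar (ZMod p) (β + a) * quadraticChar (ZMod p) (β + b) = -1 := by
  have hc : ringChar (ZMod p) ≠ 2 := by rw [ZMod.ringChar_zmod_n]; exact hp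
  set χ := quadraticChar (ZMod p)
  set c := b - a with hcdef
  have hc0 : c ≠ 0 := sub_ne_zero.mpr (Ne.symm hab)
  have h1 : ∑ β : ZMod p, χ (β + a) * χ (β + b)
      = ∑ β : ZMod p, χ β * χ (β + c) := by
    refine (Fintype.sum_equiv (Equiv.subRight a) _ _ ?_).symm
    intro β
    simp only [Equiv.subRight_apply]
    rw [sub_add_cancel]
    congr 2
    ring
  rw [h1]
  -- now sum over β of χ β * χ (β + c); the β = 0 term vanishes
  -- for β ≠ 0, χ β * χ (β + c) = χ (1 + c * β⁻¹)
  have h2 : ∀ β : ZMod p, β ≠ 0 → χ β * χ (β + c) = χ (1 + c * β⁻¹) := by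
    intro β hβ
    have : β + c = β * (1 + c * β⁻¹) := by
      field_simp
    rw [this, map_mul, ← mul_assoc, ← sq, quadraticChar_sq_one hβ, one_mul]
  -- the map β ↦ 1 + c * β⁻¹ is a bijection from nonzero β to elements ≠ 1
  have h3 : ∑ β : ZMod p, χ β * χ (β + c)
      = ∑ t ∈ univ \ {(1 : ZMod p)}, χ t := by
    rw [← Finset.sum_subset (Finset.subset_univ ({0}ᶜ : Finset (ZMod p)))]
    · refine Finset.sum_nbij' (fun β => 1 + c * β⁻¹) (fun t => c * (t - 1)⁻¹) ?_ ?_ ?_ ?_ ?_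
      · intro β hβ
        simp only [Finset.mem_compl, Finset.mem_singleton] at hβ
        simp only [Finset.mem_sdiff, Finset.mem_univ, Finset.mem_singleton, true_and]
        intro habs
        have : c * β⁻¹ = 0 := by linear_combination habs
        rcases mul_eq_zero.mp this with h | h
        · exact hc0 h
        · exact hβ (by simpa using inv_eq_zero.mp h)
      · intro t ht
        simp only [Finset.mem_sdiff, Finset.mem_univ, Finset.mem_singleton, true_and] at ht
        simp only [Finset.mem_compl, Finset.mem_singleton]
        intro habs
        rcases mul_eq_zero.mp habs with h | h
        · exact hc0 h
        · exact ht (by have := inv_eq_zero.mp h; linear_combination this)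
      · intro β hβ
        simp only [Finset.mem_compl, Finset.mem_singleton] at hβ
        field_simp
        simp [hc0]
      · intro t ht
        simp only [Finset.mem_sdiff, Finset.mem_univ, Finset.mem_singleton, true_and] at ht
        have h1 : t - 1 ≠ 0 := sub_ne_zero.mpr ht
        field_simp
        ring
      · intro β hβ
        simp only [Finset.mem_compl, Finset.mem_singleton] at hβ
        exact h2 β hβ
    · intro β _ hβ
      simp only [Finset.mem_compl, Finset.mem_singleton, not_not] at hβ
      simp [hβ, χ]
  rw [h3]
  have h4 : ∑ t ∈ univ \ {(1 : ZMod p)}, χ t = (∑ t : ZMod p, χ t) - χ 1 := by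
    rw [Finset.sum_sdiff_eq_sub (by simp)]
    simp
  rw [h4, quadraticChar_sum_zero hc]
  simp [χ]

lemma key_eq (hp : p ≠ 2) (a : ZMod p) :
    ∑ β : ZMod p, quadraticChar (ZMod p) (β + a) * quadraticChar (ZMod p) (β + a)
      = (p : ℤ) - 1 := by
  have h1 : ∑ β : ZMod p, quadraticChar (ZMod p) (β + a) * quadraticChar (ZMod p) (β + a)
      = ∑ β : ZMod p, quadraticChar (ZMod p) β * quadraticChar (ZMod p) β := by
    refine (Fintype.sum_equiv (Equiv.subRight a) _ _ ?_).symm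
    intro β
    simp [Equiv.subRight_apply, sub_add_cancel]
  rw [h1]
  have h2 : ∀ β : ZMod p, quadraticChar (ZMod p) β * quadraticChar (ZMod p) β
      = if β = 0 then 0 else 1 := by
    intro β
    by_cases hβ : β = 0
    · simp [hβ]
    · rw [← sq, quadraticChar_sq_one hβ]
      simp [hβ]
  simp_rw [h2]
  have h3 : ∀ β : ZMod p, (if β = 0 then (0:ℤ) else 1) = 1 - (if β = 0 then 1 else 0) := by
    intro β; split <;> ring
  simp_rw [h3]
  rw [Finset.sum_sub_distrib, Finset.sum_const, Finset.sum_ite_eq' Finset.univ (0 : ZMod p)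
    (fun _ => (1:ℤ))]
  simp [Finset.card_univ, ZMod.card]

theorem legendre_double_sum_vanishes
    (p : ℕ) [Fact p.Prime] (hp : 3 < p) (x₁ x₂ : ℤ)
    (h : ¬ ((x₁ : ZMod p) = (x₂ : ZMod p))) :
    ∑ α : ZMod p, ∑ β : ZMod p,
      legendreSym p (x₁ ^ 3 + (α.val : ℤ) * x₁ + (β.val : ℤ)) *
        legendreSym p (x₂ ^ 3 + (α.val : ℤ) * x₂ + (β.val : ℤ)) = 0 := by
  have hp2 : p ≠ 2 := by omega
  set X₁ := (x₁ : ZMod p)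
  set X₂ := (x₂ : ZMod p)
  have hrw : ∀ α β : ZMod p, ∀ x : ℤ,
      legendreSym p (x ^ 3 + (α.val : ℤ) * x + (β.val : ℤ))
      = quadraticChar (ZMod p) (β + ((x : ZMod p) ^ 3 + α * (x : ZMod p))) := by
    intro α β x
    rw [legendreSym]
    congr 1
    push_cast [ZMod.natCast_val, ZMod.intCast_cast, ZMod.cast_id]
    ring
  simp_rw [hrw]
  set α₀ : ZMod p := -(X₁ ^ 2 + X₁ * X₂ + X₂ ^ 2) with hα₀
  have hXne : X₁ - X₂ ≠ 0 := sub_ne_zero.mpr h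
  have habeq : X₁ ^ 3 + α₀ * X₁ = X₂ ^ 3 + α₀ * X₂ := by rw [hα₀]; ring
  have hne : ∀ α : ZMod p, α ≠ α₀ → X₁ ^ 3 + α * X₁ ≠ X₂ ^ 3 + α * X₂ := by
    intro α hα habs
    apply hα
    have h0 : (X₁ - X₂) * (α - α₀) = 0 := by rw [hα₀]; linear_combination habs
    rcases mul_eq_zero.mp h0 with h' | h'
    · exact absurd h' hXne
    · exact sub_eq_zero.mp h'
  rw [← Finset.add_sum_erase _ _ (Finset.mem_univ α₀)]
  have hmain : ∑ β : ZMod p, quadraticChar (ZMod p) (β + (X₁ ^ 3 + α₀ * X₁)) *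
      quadraticChar (ZMod p) (β + (X₂ ^ 3 + α₀ * X₂)) = (p : ℤ) - 1 := by
    rw [← habeq]
    exact key_eq hp2 _
  rw [hmain]
  have hrest : ∑ α ∈ Finset.univ.erase α₀, (∑ β : ZMod p,
      quadraticChar (ZMod p) (β + (X₁ ^ 3 + α * X₁)) *
      quadraticChar (ZMod p) (β + (X₂ ^ 3 + α * X₂))) = ∑ _α ∈ Finset.univ.erase α₀, (-1 : ℤ) := by
    refine Finset.sum_congr rfl ?_
    intro α hα
    exact key hp2 _ _ (hne α (Finset.ne_of_mem_erase hα))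
  rw [hrest, Finset.sum_const, Finset.card_erase_of_mem (Finset.mem_univ α₀),
    Finset.card_univ, ZMod.card]
  simp only [nsmul_eq_mul]
  have h1p : 1 ≤ p := by omega
  push_cast [h1p]
  ring
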